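/- Let v ∈ Gen(V) with stabilizer H = G_v, and suppose the characteristic of k does not divide |H|. Then the evaluation map at v from GL(GX) to GL(Gv) is injective, where GL(GX) is the group of matrices over k(X) realizing generic symmetries on the orbit of the indeterminate vector X. -/

import Mathlib

open Matrix

set_option synthInstance.maxHeartbeats 1000000
set_option maxHeartbeats 1600000

/-- The vector of indeterminates `X = (X₁,…,X_d)` in `k(X)^d`. -/
noncomputable def Xvec (k : Type*) [Field k] (d : ℕ) :
    Fin d → FractionRing (MvPolynomial (Fin d) k) :=
  fun i => algebraMap (MvPolynomial (Fin d) k) _ (MvPolynomial.X i)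

/-- Embedding of scalars `k → k(X)`. -/
noncomputable def toFunField (k : Type*) [Field k] (d : ℕ) :
    k → FractionRing (MvPolynomial (Fin d) k) :=
  fun a => algebraMap (MvPolynomial (Fin d) k) _ (MvPolynomial.C a)

/-- `B` is the evaluation at `v` of the matrix `A` over `k(X)`: each entry of `A` can be
written `p/q` with `q(v) ≠ 0`, and the corresponding entry of `B` is `p(v)/q(v)`. -/
def EvalAt {k : Type*} [Field k] {d : ℕ} (v : Fin d → k)
    (A : Matrix (Fin d) (Fin d) (FractionRing (MvPolynomial (Fin d) k)))
    (B : Matrix (Fin d) (Fin d) k) : Prop :=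
  ∀ i j, ∃ p q : MvPolynomial (Fin d) k,
    MvPolynomial.eval v q ≠ 0 ∧
    algebraMap (MvPolynomial (Fin d) k) _ q * A i j =
      algebraMap (MvPolynomial (Fin d) k) _ p ∧
    MvPolynomial.eval v q * B i j = MvPolynomial.eval v p

section Aux

variable {k : Type*} [Field k] {d : ℕ}

/-- the linear polynomial `(M X)_i`. -/
noncomputable def linRow (M : Matrix (Fin d) (Fin d) k) (i : Fin d) : MvPolynomial (Fin d) k :=
  ∑ j, MvPolynomial.C (M i j) * MvPolynomial.X j

lemma eval_linRow (v : Fin d → k) (M : Matrix (Fin d) (Fin d) k) (i : Fin d) :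
    MvPolynomial.eval v (linRow M i) = M.mulVec v i := by
  simp [linRow, Matrix.mulVec, dotProduct]

lemma map_mulVec_Xvec (M : Matrix (Fin d) (Fin d) k) :
    (M.map (toFunField k d)).mulVec (Xvec k d)
      = fun i => algebraMap (MvPolynomial (Fin d) k) (FractionRing (MvPolynomial (Fin d) k))
          (linRow M i) := by
  funext i
  simp only [Matrix.mulVec, dotProduct, linRow, _root_.map_sum]
  refine Finset.sum_congr rfl fun j _ => ?_
  rw [Matrix.map_apply, _root_.map_mul]
  rfl

lemma spec_row (v : Fin d → k) (c : Fin d → FractionRing (MvPolynomial (Fin d) k))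
    (b : Fin d → k) (p q : Fin d → MvPolynomial (Fin d) k)
    (hq : ∀ j, MvPolynomial.eval v (q j) ≠ 0)
    (hpq : ∀ j, algebraMap (MvPolynomial (Fin d) k) (FractionRing (MvPolynomial (Fin d) k)) (q j)
        * c j = algebraMap _ _ (p j))
    (hb : ∀ j, MvPolynomial.eval v (q j) * b j = MvPolynomial.eval v (p j))
    (r : Fin d → MvPolynomial (Fin d) k) (s : MvPolynomial (Fin d) k)
    (hrel : ∑ j, c j * algebraMap (MvPolynomial (Fin d) k)
        (FractionRing (MvPolynomial (Fin d) k)) (r j) = algebraMap _ _ s) :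
    ∑ j, b j * MvPolynomial.eval v (r j) = MvPolynomial.eval v s := by
  classical
  set φ := algebraMap (MvPolynomial (Fin d) k) (FractionRing (MvPolynomial (Fin d) k)) with hφdef
  have hφ : Function.Injective φ := IsFractionRing.injective _ _
  have key : (∑ j, (∏ j' ∈ Finset.univ.erase j, q j') * (p j * r j)) = (∏ j', q j') * s := by
    apply hφ
    rw [_root_.map_sum, _root_.map_mul, ← hrel, Finset.mul_sum]
    refine Finset.sum_congr rfl fun j _ => ?_
    rw [_root_.map_mul, _root_.map_mul, ← hpq j,
      ← Finset.prod_erase_mul Finset.univ q (Finset.mem_univ j), _root_.map_mul]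
    ring
  have key2 := congrArg (MvPolynomial.eval v) key
  simp only [_root_.map_sum, _root_.map_mul, _root_.map_prod] at key2
  have hQ : (∏ j, MvPolynomial.eval v (q j)) ≠ 0 :=
    Finset.prod_ne_zero_iff.2 fun j _ => hq j
  apply mul_left_cancel₀ hQ
  rw [Finset.mul_sum, ← key2]
  refine Finset.sum_congr rfl fun j _ => ?_
  rw [← hb j, ← Finset.prod_erase_mul Finset.univ (fun j' => MvPolynomial.eval v (q j'))
    (Finset.mem_univ j)]
  ring

end Aux

/-- If `v` is a generator whose stabilizer's order is invertible in `k`,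
then evaluation at `v` is injective on `GL(GX)`: two matrices over `k(X)` realizing
permutations on the orbit of the indeterminate vector `X` with the same evaluation at
`v` are equal. -/


theorem eval_at_generator_injective
    {k G : Type*} [Field k] [Infinite k] [Group G] [Finite G] (d : ℕ)
    (ρ : G →* GL (Fin d) k) (v : Fin d → k)
    (hv : Submodule.span k (Set.range fun g : G => (ρ g).val.mulVec v) = ⊤)
    (hH : (Nat.card {g : G // (ρ g).val.mulVec v = v} : k) ≠ 0)
    (π π' : Equiv.Perm G)
    (A A' : GL (Fin d) (FractionRing (MvPolynomial (Fin d) k)))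
    (hA : ∀ g : G, A.val.mulVec (((ρ g).val.map (toFunField k d)).mulVec (Xvec k d)) =
      ((ρ (π g)).val.map (toFunField k d)).mulVec (Xvec k d))
    (hA' : ∀ g : G, A'.val.mulVec (((ρ g).val.map (toFunField k d)).mulVec (Xvec k d)) =
      ((ρ (π' g)).val.map (toFunField k d)).mulVec (Xvec k d))
    (B : Matrix (Fin d) (Fin d) k)
    (hB : EvalAt v A.val B) (hB' : EvalAt v A'.val B) :
    A = A' := by
  classical
  cases nonempty_fintype G
  set φ := algebraMap (MvPolynomial (Fin d) k) (FractionRing (MvPolynomial (Fin d) k)) with hφdef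
  -- basic facts about the action on v
  have hmulv : ∀ a b : G, (ρ (a * b)).val.mulVec v = (ρ a).val.mulVec ((ρ b).val.mulVec v) := by
    intro a b
    rw [Matrix.mulVec_mulVec, ← Units.val_mul, ← _root_.map_mul]
  have honev : ∀ a b : G, (ρ a).val.mulVec v = (ρ b).val.mulVec v →
      (ρ (a⁻¹ * b)).val.mulVec v = v := by
    intro a b hab
    rw [hmulv, ← hab, ← hmulv, inv_mul_cancel]
    simp
  -- the stabilizer as a finset
  set Hs : Finset G := Finset.univ.filter (fun g : G => (ρ g).val.mulVec v = v) with hHsdef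
  have hHmem : ∀ {g : G}, g ∈ Hs ↔ (ρ g).val.mulVec v = v := by
    intro g; simp [hHsdef]
  have hHmul : ∀ {a b : G}, a ∈ Hs → b ∈ Hs → a * b ∈ Hs := by
    intro a b ha hb
    rw [hHmem] at ha hb ⊢
    rw [hmulv, hb, ha]
  have hcard : ((Hs.card : k)) ≠ 0 := by
    have hc : Nat.card {g : G // (ρ g).val.mulVec v = v} = Hs.card := by
      rw [Nat.card_eq_fintype_card, Fintype.card_subtype]
    rwa [hc] at hH
  -- specialization of the generic relations at v
  have hspec : ∀ (M : Matrix (Fin d) (Fin d) (FractionRing (MvPolynomial (Fin d) k)))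
      (σ : G → G), EvalAt v M B →
      (∀ g : G, M.mulVec (((ρ g).val.map (toFunField k d)).mulVec (Xvec k d)) =
        ((ρ (σ g)).val.map (toFunField k d)).mulVec (Xvec k d)) →
      ∀ g : G, B.mulVec ((ρ g).val.mulVec v) = (ρ (σ g)).val.mulVec v := by
    intro M σ hMB hM g
    choose pM qM hqM hfM hbM using hMB
    funext i
    have hrow : ∑ j, M i j * φ (linRow (ρ g).val j) = φ (linRow (ρ (σ g)).val i) := by
      have h := hM g
      rw [map_mulVec_Xvec, map_mulVec_Xvec] at h
      have h2 := congrFun h i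
      simpa [Matrix.mulVec, dotProduct] using h2
    have hres := spec_row v (fun j => M i j) (fun j => B i j) (fun j => pM i j)
      (fun j => qM i j) (fun j => hqM i j) (fun j => hfM i j) (fun j => hbM i j)
      (fun j => linRow (ρ g).val j) (linRow (ρ (σ g)).val i) hrow
    simpa [eval_linRow, Matrix.mulVec, dotProduct] using hres
  have specA := hspec A.val π hB hA
  have specA' := hspec A'.val π' hB' hA'
  have hvv : ∀ g, (ρ (π g)).val.mulVec v = (ρ (π' g)).val.mulVec v :=
    fun g => (specA g).symm.trans (specA' g)
  -- membership facts
  have memθ : ∀ (σ : G → G), (∀ g, B.mulVec ((ρ g).val.mulVec v) = (ρ (σ g)).val.mulVec v) →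
      ∀ g h, h ∈ Hs → (σ g)⁻¹ * σ (g * h) ∈ Hs := by
    intro σ hσ g h hh
    rw [hHmem] at hh ⊢
    apply honev
    rw [← hσ, ← hσ, hmulv, hh]
  have memh0 : ∀ g, (π g)⁻¹ * π' g ∈ Hs := by
    intro g
    rw [hHmem]
    exact honev _ _ (hvv g)
  -- main step: generic matrices map averaged columns to averaged columns
  have hstep : ∀ (M : Matrix (Fin d) (Fin d) (FractionRing (MvPolynomial (Fin d) k)))
      (σ : G → G), Function.Injective σ →
      (∀ g : G, M.mulVec (((ρ g).val.map (toFunField k d)).mulVec (Xvec k d)) =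
        ((ρ (σ g)).val.map (toFunField k d)).mulVec (Xvec k d)) →
      (∀ g h, h ∈ Hs → (σ g)⁻¹ * σ (g * h) ∈ Hs) →
      ∀ g : G, M.mulVec (fun l => φ (∑ h ∈ Hs, linRow (ρ (g * h)).val l)) =
        fun l => φ (∑ h ∈ Hs, linRow (ρ (σ g * h)).val l) := by
    intro M σ hσinj hM hσH g
    have hM' : ∀ g', M.mulVec (fun l => φ (linRow (ρ g').val l)) =
        (fun l => φ (linRow (ρ (σ g')).val l)) := by
      intro g'
      have h := hM g'
      rwa [map_mulVec_Xvec, map_mulVec_Xvec] at h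
    have hcolsum : (fun l => φ (∑ h ∈ Hs, linRow (ρ (g * h)).val l)) =
        ∑ h ∈ Hs, (fun l => φ (linRow (ρ (g * h)).val l)) := by
      funext l
      rw [Finset.sum_apply]
      exact map_sum φ _ _
    rw [hcolsum]
    have hsum : M.mulVec (∑ h ∈ Hs, (fun l => φ (linRow (ρ (g * h)).val l))) =
        ∑ h ∈ Hs, M.mulVec (fun l => φ (linRow (ρ (g * h)).val l)) := by
      simp only [← Matrix.mulVecLin_apply]
      exact map_sum (Matrix.mulVecLin M) _ _
    rw [hsum]
    funext l
    rw [Finset.sum_apply]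
    have h1 : ∀ h ∈ Hs, M.mulVec (fun l' => φ (linRow (ρ (g * h)).val l')) l =
        φ (linRow (ρ (σ g * ((σ g)⁻¹ * σ (g * h)))).val l) := by
      intro h _
      rw [hM' (g * h)]
      have hgr : σ g * ((σ g)⁻¹ * σ (g * h)) = σ (g * h) := by group
      rw [hgr]
    rw [Finset.sum_congr rfl h1]
    have hθinj : ∀ x ∈ Hs, ∀ y ∈ Hs,
        (σ g)⁻¹ * σ (g * x) = (σ g)⁻¹ * σ (g * y) → x = y := by
      intro x _ y _ hxy
      exact mul_left_cancel (hσinj (mul_left_cancel hxy))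
    have himg : Hs.image (fun h => (σ g)⁻¹ * σ (g * h)) = Hs := by
      apply Finset.eq_of_subset_of_card_le
      · intro x hx
        obtain ⟨h, hh, rfl⟩ := Finset.mem_image.1 hx
        exact hσH g h hh
      · rw [Finset.card_image_of_injOn hθinj]
    have h2 : ∑ h ∈ Hs, φ (linRow (ρ (σ g * ((σ g)⁻¹ * σ (g * h)))).val l) =
        ∑ h' ∈ Hs.image (fun h => (σ g)⁻¹ * σ (g * h)), φ (linRow (ρ (σ g * h')).val l) :=
      (Finset.sum_image (f := fun h' => φ (linRow (ρ (σ g * h')).val l)) hθinj).symm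
    rw [h2, himg]
    exact (map_sum φ _ _).symm
  have hA2 := hstep A.val π π.injective hA (memθ π specA)
  have hA2' := hstep A'.val π' π'.injective hA' (memθ π' specA')
  -- the two images coincide
  have hcolEq : ∀ g : G, (fun l => φ (∑ h ∈ Hs, linRow (ρ (π' g * h)).val l)) =
      (fun l => φ (∑ h ∈ Hs, linRow (ρ (π g * h)).val l)) := by
    intro g
    have hh₀ : (π g)⁻¹ * π' g ∈ Hs := memh0 g
    have hinj : ∀ x ∈ Hs, ∀ y ∈ Hs,
        ((π g)⁻¹ * π' g) * x = ((π g)⁻¹ * π' g) * y → x = y :=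
      fun x _ y _ hxy => mul_left_cancel hxy
    have himg : Hs.image (fun h => ((π g)⁻¹ * π' g) * h) = Hs := by
      apply Finset.eq_of_subset_of_card_le
      · intro x hx
        obtain ⟨h, hh, rfl⟩ := Finset.mem_image.1 hx
        exact hHmul hh₀ hh
      · rw [Finset.card_image_of_injOn hinj]
    funext l
    congr 1
    calc ∑ h ∈ Hs, linRow (ρ (π' g * h)).val l
        = ∑ h ∈ Hs, linRow (ρ (π g * (((π g)⁻¹ * π' g) * h))).val l := by
          refine Finset.sum_congr rfl fun h _ => ?_
          have hmm : π g * (((π g)⁻¹ * π' g) * h) = π' g * h := by group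
          rw [hmm]
      _ = ∑ h' ∈ Hs.image (fun h => ((π g)⁻¹ * π' g) * h), linRow (ρ (π g * h')).val l :=
          (Finset.sum_image (f := fun h' => linRow (ρ (π g * h')).val l) hinj).symm
      _ = ∑ h' ∈ Hs, linRow (ρ (π g * h')).val l := by rw [himg]
  have hAgree : ∀ g : G, A.val.mulVec (fun l => φ (∑ h ∈ Hs, linRow (ρ (g * h)).val l)) =
      A'.val.mulVec (fun l => φ (∑ h ∈ Hs, linRow (ρ (g * h)).val l)) := by
    intro g
    rw [hA2 g, hA2' g, hcolEq g]
  -- choose group elements whose orbit vectors form a basis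
  obtain ⟨t, hts, htspan, htli⟩ :=
    exists_linearIndependent k (Set.range fun g : G => (ρ g).val.mulVec v)
  haveI : Fintype t := (htli.set_finite_of_isNoetherian).fintype
  have hspan : ⊤ ≤ Submodule.span k (Set.range ((↑) : t → (Fin d → k))) := by
    rw [Subtype.range_coe, htspan, hv]
  set b : Module.Basis t k (Fin d → k) := Module.Basis.mk htli hspan with hbdef
  have hcardt : Fintype.card t = d := by
    have h1 := Module.finrank_eq_card_basis b
    rw [Module.finrank_pi, Fintype.card_fin] at h1
    exact h1.symm
  set e : Fin d ≃ t := (Fintype.equivFinOfCardEq hcardt).symm with hedef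
  have hgsel : ∀ i : Fin d, ∃ g : G, (ρ g).val.mulVec v = (e i : Fin d → k) :=
    fun i => hts (e i).2
  choose gsel hgsel using hgsel
  set N : Matrix (Fin d) (Fin d) k :=
    Matrix.of (fun i j : Fin d => (ρ (gsel j)).val.mulVec v i) with hNdef
  have hNdet : N.det ≠ 0 := by
    set b' : Module.Basis (Fin d) k (Fin d → k) := b.reindex e.symm with hb'def
    have hNmat : N = (Pi.basisFun k (Fin d)).toMatrix b' := by
      ext i j
      rw [Module.Basis.toMatrix_apply, Pi.basisFun_repr, hb'def, Module.Basis.reindex_apply]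
      simp only [Equiv.symm_symm, hbdef, Module.Basis.mk_apply]
      rw [hNdef]
      simp only [Matrix.of_apply]
      rw [hgsel j]
    have : Invertible ((Pi.basisFun k (Fin d)).toMatrix b') :=
      (Pi.basisFun k (Fin d)).invertibleToMatrix b'
    rw [hNmat]
    exact isUnit_iff_ne_zero.1 (isUnit_det_of_invertible _)
  -- the polynomial matrix of averaged columns
  set τmat : Matrix (Fin d) (Fin d) (MvPolynomial (Fin d) k) :=
    Matrix.of (fun i j => ∑ h ∈ Hs, linRow (ρ (gsel j * h)).val i) with hτdef
  have hevalτ : τmat.map (MvPolynomial.eval v) = (Hs.card : k) • N := by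
    ext i j
    rw [Matrix.map_apply, hτdef]
    simp only [Matrix.of_apply]
    rw [map_sum]
    have hterm : ∀ h ∈ Hs, MvPolynomial.eval v (linRow (ρ (gsel j * h)).val i) =
        (ρ (gsel j)).val.mulVec v i := by
      intro h hh
      rw [eval_linRow, hmulv, hHmem.1 hh]
    rw [Finset.sum_congr rfl hterm, Finset.sum_const, Matrix.smul_apply, hNdef]
    simp [nsmul_eq_mul]
  have hdetτ : τmat.det ≠ 0 := by
    intro h0
    have h1 : MvPolynomial.eval v τmat.det ≠ 0 := by
      rw [RingHom.map_det, RingHom.mapMatrix_apply, hevalτ, Matrix.det_smul]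
      exact mul_ne_zero (pow_ne_zero _ hcard) hNdet
    rw [h0, map_zero] at h1
    exact h1 rfl
  set MF : Matrix (Fin d) (Fin d) (FractionRing (MvPolynomial (Fin d) k)) :=
    τmat.map φ with hMFdef2
  have hMFdet : MF.det ≠ 0 := by
    rw [hMFdef2]
    have hh : (τmat.map φ).det = φ τmat.det := by
      rw [RingHom.map_det, RingHom.mapMatrix_apply]
    rw [hh]
    intro h0
    exact hdetτ (IsFractionRing.injective (MvPolynomial (Fin d) k)
      (FractionRing (MvPolynomial (Fin d) k)) (h0.trans (map_zero φ).symm))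
  have hMFunit : IsUnit MF := (Matrix.isUnit_iff_isUnit_det MF).2 (isUnit_iff_ne_zero.2 hMFdet)
  have hprod : A.val * MF = A'.val * MF := by
    ext i j
    have h1 := congrFun (hAgree (gsel j)) i
    simpa [Matrix.mul_apply, Matrix.mulVec, dotProduct, hMFdef2, Matrix.map_apply,
      hτdef] using h1
  have hval : A.val = A'.val := by
    obtain ⟨U, hU⟩ := hMFunit
    calc A.val = A.val * MF * (↑U⁻¹) := by rw [← hU, mul_assoc, Units.mul_inv, mul_one]
      _ = A'.val * MF * (↑U⁻¹) := by rw [hprod]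
      _ = A'.val := by rw [← hU, mul_assoc, Units.mul_inv, mul_one]
  exact Units.ext hval
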